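/- Let n ≥ 4 and let D be the demand multigraph on n vertices consisting of two disjoint bundles: vertices U,V joined by n-2 parallel edges and vertices X,Y joined by n-2 parallel edges (all other vertices isolated). Then D cannot be resolved in Kₙ: there is no collection of 2n-4 pairwise edge-disjoint paths in the complete graph Kₙ realizing the demand edges. -/

import Mathlib

/-- A demand multigraph, given as a list of demand edges (ordered pairs), can be
resolved in the complete graph: there is an assignment of a path in `K_V` to each
demand edge, connecting its endpoints, such that the paths are pairwise edge-disjoint. -/
def Resolvable {V : Type*} (D : List (V × V)) : Prop :=
  ∃ P : (i : Fin D.length) → (⊤ : SimpleGraph V).Walk (D.get i).1 (D.get i).2,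
    (∀ i, (P i).IsPath) ∧
    ∀ i j, i ≠ j → ∀ e ∈ (P i).edges, e ∉ (P j).edges

section Helpers

open SimpleGraph Finset

variable {V : Type*} [DecidableEq V]

set_option linter.unusedSectionVars false

lemma first_edge {G : SimpleGraph V} {a b : V} (p : G.Walk a b) (h : a ≠ b) :
    ∃ e ∈ p.edges, a ∈ e := by
  cases p with
  | nil => exact absurd rfl h
  | @cons _ c _ h' q => exact ⟨s(a,c), by simp, by simp⟩

lemma last_edge {G : SimpleGraph V} {a b : V} (p : G.Walk a b) (h : a ≠ b) :
    ∃ e ∈ p.edges, b ∈ e := by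
  obtain ⟨e, he, hbe⟩ := first_edge p.reverse h.symm
  rw [SimpleGraph.Walk.edges_reverse, List.mem_reverse] at he
  exact ⟨e, he, hbe⟩

lemma mem_support_of_mem_edge {G : SimpleGraph V} {a b z : V} (p : G.Walk a b)
    {e : Sym2 V} (he : e ∈ p.edges) (hz : z ∈ e) : z ∈ p.support := by
  induction e with
  | h s t =>
    rcases Sym2.mem_iff.mp hz with rfl | rfl
    · exact p.fst_mem_support_of_mem_edges he
    · exact p.snd_mem_support_of_mem_edges he

lemma two_edges {G : SimpleGraph V} {a b z : V} (p : G.Walk a b) (hp : p.IsPath)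
    (hz : z ∈ p.support) (hza : z ≠ a) (hzb : z ≠ b) :
    ∃ e f, e ∈ p.edges ∧ f ∈ p.edges ∧ z ∈ e ∧ z ∈ f ∧ e ≠ f := by
  have hspec := p.take_spec hz
  have hedges : p.edges = (p.takeUntil z hz).edges ++ (p.dropUntil z hz).edges := by
    conv_lhs => rw [← hspec]
    exact SimpleGraph.Walk.edges_append _ _
  obtain ⟨e, he, hze⟩ := last_edge (p.takeUntil z hz) hza.symm
  obtain ⟨f, hf, hzf⟩ := first_edge (p.dropUntil z hz) hzb
  have hnd : p.edges.Nodup := hp.isTrail.edges_nodup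
  rw [hedges] at hnd
  have hdisj := (List.nodup_append'.mp hnd).2.2
  refine ⟨e, f, ?_, ?_, hze, hzf, ?_⟩
  · rw [hedges]; exact List.mem_append_left _ he
  · rw [hedges]; exact List.mem_append_right _ hf
  · intro hef; exact hdisj he (hef ▸ hf)

lemma edge_mem_incidence {a b z : V} [Fintype V] (p : (⊤ : SimpleGraph V).Walk a b)
    {e : Sym2 V} (he : e ∈ p.edges) (hz : z ∈ e) :
    e ∈ (⊤ : SimpleGraph V).incidenceFinset z := by
  rw [SimpleGraph.mem_incidenceFinset]
  exact ⟨p.edges_subset_edgeSet he, hz⟩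

lemma not_through [Fintype V] {a b c d : V} (hn : 4 ≤ Fintype.card V) (hab : a ≠ b)
    (R : Fin (Fintype.card V - 2) → (⊤ : SimpleGraph V).Walk a b)
    (hRR : ∀ i j, i ≠ j → ∀ e ∈ (R i).edges, e ∉ (R j).edges)
    (p : (⊤ : SimpleGraph V).Walk c d) (hp : p.IsPath)
    (hpd : ∀ i, ∀ e ∈ p.edges, e ∉ (R i).edges)
    (hac : a ≠ c) (had : a ≠ d) : a ∉ p.support := by
  intro hz
  obtain ⟨e, f, he, hf, hae, haf, hef⟩ := two_edges p hp hz hac had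
  choose g hg1 hg2 using fun i => first_edge (R i) hab
  have hginj : Function.Injective g := by
    intro i j hij
    by_contra hne
    exact hRR i j hne (g i) (hg1 i) (hij ▸ hg1 j)
  set F : Finset (Sym2 V) := Finset.image g Finset.univ with hF
  have hcardF : F.card = Fintype.card V - 2 := by
    rw [hF, Finset.card_image_of_injective _ hginj, Finset.card_univ, Fintype.card_fin]
  have heF : e ∉ F := by
    simp only [hF, Finset.mem_image]
    rintro ⟨i, -, rfl⟩
    exact hpd i _ he (hg1 i)
  have hfF : f ∉ F := by
    simp only [hF, Finset.mem_image]
    rintro ⟨i, -, rfl⟩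
    exact hpd i _ hf (hg1 i)
  have hsub : insert e (insert f F) ⊆ (⊤ : SimpleGraph V).incidenceFinset a := by
    intro s hs
    rcases Finset.mem_insert.mp hs with rfl | hs
    · exact edge_mem_incidence p he hae
    rcases Finset.mem_insert.mp hs with rfl | hs
    · exact edge_mem_incidence p hf haf
    · obtain ⟨i, -, rfl⟩ := Finset.mem_image.mp hs
      exact edge_mem_incidence (R i) (hg1 i) (hg2 i)
  have hcard := Finset.card_le_card hsub
  rw [Finset.card_insert_of_notMem (by simp [hef, heF]),
    Finset.card_insert_of_notMem hfF, hcardF,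
    SimpleGraph.card_incidenceFinset_eq_degree, SimpleGraph.complete_graph_degree] at hcard
  omega


lemma main_aux [Fintype V] {u v x y : V} (hn : 4 ≤ Fintype.card V)
    (huv : u ≠ v) (hxy : x ≠ y) (hxu : x ≠ u) (hxv : x ≠ v) (hyu : y ≠ u) (hyv : y ≠ v)
    (Q : Fin (Fintype.card V - 2) → (⊤ : SimpleGraph V).Walk u v)
    (R : Fin (Fintype.card V - 2) → (⊤ : SimpleGraph V).Walk x y)
    (hQpath : ∀ i, (Q i).IsPath)
    (hQQ : ∀ i j, i ≠ j → ∀ e ∈ (Q i).edges, e ∉ (Q j).edges)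
    (hRR : ∀ i j, i ≠ j → ∀ e ∈ (R i).edges, e ∉ (R j).edges)
    (hQR : ∀ i j, ∀ e ∈ (Q i).edges, e ∉ (R j).edges) : False := by
  have hxQ : ∀ i, x ∉ (Q i).support := fun i =>
    not_through hn hxy R hRR (Q i) (hQpath i) (fun j e he => hQR i j e he) hxu hxv
  have hyQ : ∀ i, y ∉ (Q i).support := by
    intro i
    refine not_through hn hxy.symm (fun j => (R j).reverse) ?_ (Q i) (hQpath i) ?_ hyu hyv
    · intro a b hab e he
      rw [SimpleGraph.Walk.edges_reverse, List.mem_reverse] at he ⊢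
      exact hRR a b hab e he
    · intro j e he
      rw [SimpleGraph.Walk.edges_reverse, List.mem_reverse]
      exact hQR i j e he
  choose g hg1 hg2 using fun i => first_edge (Q i) huv
  have hginj : Function.Injective g := by
    intro i j hij
    by_contra hne
    exact hQQ i j hne (g i) (hg1 i) (hij ▸ hg1 j)
  have hsub : Finset.image g Finset.univ ⊆
      (⊤ : SimpleGraph V).incidenceFinset u \ {s(u, x), s(u, y)} := by
    intro s hs
    obtain ⟨i, -, rfl⟩ := Finset.mem_image.mp hs
    rw [Finset.mem_sdiff]
    refine ⟨edge_mem_incidence (Q i) (hg1 i) (hg2 i), ?_⟩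
    simp only [Finset.mem_insert, Finset.mem_singleton]
    rintro (h | h)
    · exact hxQ i (mem_support_of_mem_edge (Q i) (hg1 i) (by rw [h]; simp))
    · exact hyQ i (mem_support_of_mem_edge (Q i) (hg1 i) (by rw [h]; simp))
  have hpair : ({s(u, x), s(u, y)} : Finset (Sym2 V)) ⊆
      (⊤ : SimpleGraph V).incidenceFinset u := by
    intro s hs
    simp only [Finset.mem_insert, Finset.mem_singleton] at hs
    rw [SimpleGraph.mem_incidenceFinset]
    rcases hs with rfl | rfl
    · exact ⟨by simpa using hxu.symm, by simp⟩
    · exact ⟨by simpa using hyu.symm, by simp⟩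
  have hpaircard : ({s(u, x), s(u, y)} : Finset (Sym2 V)).card = 2 := by
    rw [Finset.card_insert_of_notMem (by simp [Sym2.eq_iff, hxy, hyu.symm]), Finset.card_singleton]
  have hcard := Finset.card_le_card hsub
  rw [Finset.card_image_of_injective _ hginj, Finset.card_univ, Fintype.card_fin,
    Finset.card_sdiff_of_subset hpair, hpaircard, SimpleGraph.card_incidenceFinset_eq_degree,
    SimpleGraph.complete_graph_degree] at hcard
  omega

end Helpers

/-- For `n ≥ 4`, the demand multigraph on the `n` vertices of `Kₙ` consisting of two
disjoint bundles of `n - 2` parallel edges (between `u, v` and between `x, y`, all four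
distinct) cannot be resolved by pairwise edge-disjoint paths in `Kₙ`. -/
theorem two_bundles_not_resolvable {V : Type*} [Fintype V] [DecidableEq V]
    (hn : 4 ≤ Fintype.card V)
    (u v x y : V) (hdist : [u, v, x, y].Nodup) :
    ¬ Resolvable (List.replicate (Fintype.card V - 2) (u, v) ++
        List.replicate (Fintype.card V - 2) (x, y)) := by
  have huv : u ≠ v := by simp at hdist; tauto
  have hxy : x ≠ y := by simp at hdist; tauto
  have hxu : x ≠ u := by simp at hdist; tauto
  have hxv : x ≠ v := by simp at hdist; tauto
  have hyu : y ≠ u := by simp at hdist; tauto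
  have hyv : y ≠ v := by simp at hdist; tauto
  rintro ⟨P, hPpath, hPdisj⟩
  have hlen : (List.replicate (Fintype.card V - 2) (u, v) ++
      List.replicate (Fintype.card V - 2) (x, y)).length =
      (Fintype.card V - 2) + (Fintype.card V - 2) := by simp
  have hi1 : ∀ i : Fin (Fintype.card V - 2), (i : ℕ) < (List.replicate (Fintype.card V - 2) (u, v) ++
      List.replicate (Fintype.card V - 2) (x, y)).length := by
    intro i; rw [hlen]; omega
  have hi2 : ∀ i : Fin (Fintype.card V - 2), (Fintype.card V - 2) + (i : ℕ) <
      (List.replicate (Fintype.card V - 2) (u, v) ++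
      List.replicate (Fintype.card V - 2) (x, y)).length := by
    intro i; rw [hlen]; omega
  have hget1 : ∀ i : Fin (Fintype.card V - 2),
      (List.replicate (Fintype.card V - 2) (u, v) ++
      List.replicate (Fintype.card V - 2) (x, y)).get ⟨i, hi1 i⟩ = (u, v) := by
    intro i
    simp only [List.get_eq_getElem]
    rw [List.getElem_append_left (by simp [i.2])]
    simp
  have hget2 : ∀ i : Fin (Fintype.card V - 2),
      (List.replicate (Fintype.card V - 2) (u, v) ++
      List.replicate (Fintype.card V - 2) (x, y)).get ⟨(Fintype.card V - 2) + i, hi2 i⟩ = (x, y) := by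
    intro i
    simp only [List.get_eq_getElem]
    rw [List.getElem_append_right (by simp)]
    simp
  refine main_aux hn huv hxy hxu hxv hyu hyv
    (fun i => (P ⟨i, hi1 i⟩).copy (congrArg Prod.fst (hget1 i)) (congrArg Prod.snd (hget1 i)))
    (fun i => (P ⟨(Fintype.card V - 2) + i, hi2 i⟩).copy
      (congrArg Prod.fst (hget2 i)) (congrArg Prod.snd (hget2 i)))
    (fun i => by simpa using hPpath _) ?_ ?_ ?_
  · intro i j hij e he
    simp only [SimpleGraph.Walk.edges_copy] at he ⊢
    refine hPdisj _ _ ?_ e he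
    simp only [ne_eq, Fin.mk.injEq]
    exact fun h => hij (Fin.ext h)
  · intro i j hij e he
    simp only [SimpleGraph.Walk.edges_copy] at he ⊢
    refine hPdisj _ _ ?_ e he
    simp only [ne_eq, Fin.mk.injEq]
    intro h
    exact hij (Fin.ext (by omega))
  · intro i j e he
    simp only [SimpleGraph.Walk.edges_copy] at he ⊢
    refine hPdisj _ _ ?_ e he
    simp only [ne_eq, Fin.mk.injEq]
    have := i.2
    omega
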